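/- If f_n : [0,T] → [0,∞) are measurable functions bounded uniformly by an integrable function, and lim sup_n f_n(t) ≤ C ∫_0^t (t−s)^{-κ} lim sup_n f_n(s) ds for all t ∈ [0,T] with κ ∈ (0,1) and C > 0, then lim sup_n f_n(t) = 0 for all t ∈ [0,T]. -/

import Mathlib

open Filter
open MeasureTheory Set

theorem sg_inner_int (s b κ : ℝ) (hsb : s ≤ b) (hκ1 : κ < 1) :
    ∫⁻ t in Set.Ioc s b, ENNReal.ofReal ((t - s) ^ (-κ)) =
      ENNReal.ofReal ((b - s) ^ (1 - κ) / (1 - κ)) := by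
  have hint : IntervalIntegrable (fun t => (t - s) ^ (-κ)) volume s b := by
    have := (intervalIntegral.intervalIntegrable_rpow' (a := 0) (b := b - s) (r := -κ) (by linarith)).comp_sub_right s
    simpa using this
  have hnn : ∀ t ∈ Set.Ioc s b, 0 ≤ (t - s) ^ (-κ) := fun t ht =>
    Real.rpow_nonneg (by linarith [ht.1]) _
  rw [← ofReal_integral_eq_lintegral_ofReal]
  · congr 1
    have : ∫ t in Set.Ioc s b, (t - s) ^ (-κ) = ∫ t in s..b, (t - s) ^ (-κ) := by
      rw [intervalIntegral.integral_of_le hsb]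
    rw [this, intervalIntegral.integral_comp_sub_right (fun u => u ^ (-κ)) s,
      integral_rpow (Or.inl (by linarith))]
    simp [sub_self, Real.zero_rpow (by linarith : (-κ) + 1 ≠ 0)]
    ring_nf
  · exact hint.1
  · exact ae_restrict_of_forall_mem measurableSet_Ioc hnn

theorem swap_aux (a b κ : ℝ) (G : ℝ → ENNReal) (hG : Measurable G) :
    ∫⁻ t in Set.Ioc a b, ∫⁻ s in Set.Ioo a t, ENNReal.ofReal ((t-s)^(-κ)) * G s
      = ∫⁻ s in Set.Ioo a b, G s * ∫⁻ t in Set.Ioc s b, ENNReal.ofReal ((t-s)^(-κ)) := by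
  have hrpow : Measurable (fun x : ℝ => x ^ (-κ)) := by fun_prop
  have hKm : Measurable (fun p : ℝ × ℝ => ENNReal.ofReal ((p.1 - p.2) ^ (-κ)) * G p.2) :=
    ((hrpow.comp (measurable_fst.sub measurable_snd)).ennreal_ofReal).mul (hG.comp measurable_snd)
  have hRm : MeasurableSet {p : ℝ × ℝ | a < p.2 ∧ p.2 < b ∧ p.2 < p.1 ∧ p.1 ≤ b} := by
    apply MeasurableSet.inter (measurableSet_lt measurable_const measurable_snd)
    apply MeasurableSet.inter (measurableSet_lt measurable_snd measurable_const)
    exact (measurableSet_lt measurable_snd measurable_fst).inter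
      (measurableSet_le measurable_fst measurable_const)
  set R : Set (ℝ × ℝ) := {p : ℝ × ℝ | a < p.2 ∧ p.2 < b ∧ p.2 < p.1 ∧ p.1 ≤ b}
  have hfm : AEMeasurable
      (Function.uncurry fun t s =>
        R.indicator (fun p : ℝ × ℝ => ENNReal.ofReal ((p.1 - p.2) ^ (-κ)) * G p.2) (t, s))
      ((volume : Measure ℝ).prod volume) := by
    have : (Function.uncurry fun t s =>
        R.indicator (fun p : ℝ × ℝ => ENNReal.ofReal ((p.1 - p.2) ^ (-κ)) * G p.2) (t, s))
        = R.indicator (fun p : ℝ × ℝ => ENNReal.ofReal ((p.1 - p.2) ^ (-κ)) * G p.2) := rfl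
    rw [this]
    exact (hKm.indicator hRm).aemeasurable
  have L : ∫⁻ t in Set.Ioc a b, ∫⁻ s in Set.Ioo a t, ENNReal.ofReal ((t-s)^(-κ)) * G s
      = ∫⁻ t, ∫⁻ s, R.indicator (fun p : ℝ × ℝ => ENNReal.ofReal ((p.1 - p.2) ^ (-κ)) * G p.2) (t, s) := by
    rw [← lintegral_indicator measurableSet_Ioc]
    congr 1; ext t
    by_cases ht : t ∈ Set.Ioc a b
    · rw [Set.indicator_of_mem ht, ← lintegral_indicator measurableSet_Ioo]
      congr 1; ext s
      by_cases hs : s ∈ Set.Ioo a t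
      · rw [Set.indicator_of_mem hs, Set.indicator_of_mem]
        exact ⟨hs.1, lt_of_lt_of_le hs.2 ht.2, hs.2, ht.2⟩
      · rw [Set.indicator_of_notMem hs, Set.indicator_of_notMem]
        intro hmem; exact hs ⟨hmem.1, hmem.2.2.1⟩
    · rw [Set.indicator_of_notMem ht]
      have hz : ∀ s : ℝ, R.indicator (fun p : ℝ × ℝ => ENNReal.ofReal ((p.1 - p.2) ^ (-κ)) * G p.2) (t, s) = 0 := by
        intro s
        rw [Set.indicator_of_notMem]
        intro hmem
        exact ht ⟨lt_trans hmem.1 hmem.2.2.1, hmem.2.2.2⟩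
      simp only [hz, lintegral_zero]
  have Rr : ∫⁻ s in Set.Ioo a b, G s * ∫⁻ t in Set.Ioc s b, ENNReal.ofReal ((t-s)^(-κ))
      = ∫⁻ s, ∫⁻ t, R.indicator (fun p : ℝ × ℝ => ENNReal.ofReal ((p.1 - p.2) ^ (-κ)) * G p.2) (t, s) := by
    rw [← lintegral_indicator measurableSet_Ioo]
    congr 1; ext s
    have hswap : G s * ∫⁻ t in Set.Ioc s b, ENNReal.ofReal ((t-s)^(-κ))
        = ∫⁻ t in Set.Ioc s b, ENNReal.ofReal ((t-s)^(-κ)) * G s := by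
      rw [mul_comm]
      exact (lintegral_mul_const (G s) ((hrpow.comp (measurable_id.sub measurable_const)).ennreal_ofReal)).symm
    by_cases hs : s ∈ Set.Ioo a b
    · rw [Set.indicator_of_mem hs, hswap, ← lintegral_indicator measurableSet_Ioc]
      congr 1; ext t
      by_cases ht : t ∈ Set.Ioc s b
      · rw [Set.indicator_of_mem ht, Set.indicator_of_mem]
        exact ⟨hs.1, hs.2, ht.1, ht.2⟩
      · rw [Set.indicator_of_notMem ht, Set.indicator_of_notMem]
        intro hmem; exact ht ⟨hmem.2.2.1, hmem.2.2.2⟩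
    · rw [Set.indicator_of_notMem hs]
      have hz : ∀ t : ℝ, R.indicator (fun p : ℝ × ℝ => ENNReal.ofReal ((p.1 - p.2) ^ (-κ)) * G p.2) (t, s) = 0 := by
        intro t
        rw [Set.indicator_of_notMem]
        intro hmem
        exact hs ⟨hmem.1, hmem.2.1⟩
      simp only [hz, lintegral_zero]
  rw [L, Rr, lintegral_lintegral_swap hfm]

theorem key_step (T C κ : ℝ) (hC : 0 < C) (hκ0 : 0 < κ) (hκ1 : κ < 1)
    (g φ : ℝ → ℝ) (hgm : Measurable g)
    (hgnn : ∀ t ∈ Set.Icc (0:ℝ) T, 0 ≤ g t)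
    (hφ : IntegrableOn φ (Set.Icc (0:ℝ) T))
    (hgφ : ∀ t ∈ Set.Icc (0:ℝ) T, g t ≤ φ t)
    (h : ∀ t ∈ Set.Icc (0:ℝ) T, g t ≤ C * ∫ s in (0:ℝ)..t, (t-s)^(-κ) * g s)
    (δ : ℝ) (hδ : 0 < δ) (hδq : C * δ^(1-κ) / (1-κ) ≤ 1/2)
    (a b : ℝ) (ha : 0 ≤ a) (hab : a ≤ b) (hbT : b ≤ T) (hba : b ≤ a + δ)
    (h0 : ∀ᵐ s, s ∈ Set.Ioc (0:ℝ) a → g s = 0) :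
    ∀ᵐ s, s ∈ Set.Ioc (0:ℝ) b → g s = 0 := by
  set G : ℝ → ENNReal := fun s => ENNReal.ofReal (g s) with hG
  have hGm : Measurable G := hgm.ennreal_ofReal
  -- Step B : pointwise bound in ENNReal for t ∈ Ioc a b, given a.e. info; we phrase it a.e.
  have stepB : ∀ᵐ t ∂(volume.restrict (Set.Ioc a b)),
      G t ≤ ENNReal.ofReal C * ∫⁻ s in Set.Ioo a t, ENNReal.ofReal ((t-s)^(-κ)) * G s := by
    rw [ae_restrict_iff' measurableSet_Ioc]
    filter_upwards [ae_of_all _ (fun _ => trivial)] with t _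
    intro ht
    have htT : t ∈ Set.Icc (0:ℝ) T := ⟨le_of_lt (lt_of_le_of_lt ha ht.1), le_trans ht.2 hbT⟩
    have ht0 : (0:ℝ) ≤ t := htT.1
    -- rewrite the interval integral as a set integral over Ioo a t
    have hsub : Set.Ioo a t ⊆ Set.Ioc 0 t := fun s hs => ⟨lt_of_le_of_lt ha hs.1, le_of_lt hs.2⟩
    have hcong : ∫ s in (0:ℝ)..t, (t-s)^(-κ) * g s
        = ∫ s in Set.Ioo a t, (t-s)^(-κ) * g s := by
      rw [intervalIntegral.integral_of_le ht0]
      have : ∀ᵐ s, s ∈ Set.Ioc (0:ℝ) t →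
          (t-s)^(-κ) * g s = (Set.Ioo a t).indicator (fun s => (t-s)^(-κ) * g s) s := by
        filter_upwards [h0] with s hs0 hs
        by_cases hmem : s ∈ Set.Ioo a t
        · rw [Set.indicator_of_mem hmem]
        · rw [Set.indicator_of_notMem hmem]
          rcases lt_or_ge a s with has | hsa
          · have hst : s = t := by
              rcases lt_or_eq_of_le hs.2 with hlt | he
              · exact absurd ⟨has, hlt⟩ hmem
              · exact he
            rw [hst, sub_self, Real.zero_rpow (neg_ne_zero.mpr (ne_of_gt hκ0)), zero_mul]
          · rw [hs0 ⟨hs.1, hsa⟩, mul_zero]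
      rw [setIntegral_congr_ae measurableSet_Ioc this,
        MeasureTheory.integral_indicator measurableSet_Ioo,
        Measure.restrict_restrict measurableSet_Ioo,
        Set.inter_eq_self_of_subset_left hsub]
    have hineq := h t htT
    rw [hcong] at hineq
    -- pass to ENNReal
    have hofI : ENNReal.ofReal (∫ s in Set.Ioo a t, (t-s)^(-κ) * g s)
        ≤ ∫⁻ s in Set.Ioo a t, ENNReal.ofReal ((t-s)^(-κ)) * G s := by
      have hnn : 0 ≤ᵐ[volume.restrict (Set.Ioo a t)] fun s => (t-s)^(-κ) * g s := by
        rw [EventuallyLE, ae_restrict_iff' measurableSet_Ioo]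
        filter_upwards [ae_of_all _ (fun _ => trivial)] with s _ hs
        exact mul_nonneg (Real.rpow_nonneg (by linarith [hs.2]) _)
          (hgnn s ⟨le_of_lt (lt_of_le_of_lt ha hs.1), le_trans (le_of_lt hs.2) htT.2⟩)
      have heq : ∀ᵐ s ∂(volume.restrict (Set.Ioo a t)),
          ENNReal.ofReal ((t-s)^(-κ) * g s) = ENNReal.ofReal ((t-s)^(-κ)) * G s := by
        rw [ae_restrict_iff' measurableSet_Ioo]
        filter_upwards [ae_of_all _ (fun _ => trivial)] with s _ hs
        rw [hG, ENNReal.ofReal_mul (Real.rpow_nonneg (by linarith [hs.2]) _)]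
      rw [← lintegral_congr_ae heq]
      by_cases hInt : IntegrableOn (fun s => (t-s)^(-κ) * g s) (Set.Ioo a t)
      · exact le_of_eq (ofReal_integral_eq_lintegral_ofReal hInt hnn)
      · rw [integral_undef hInt]; simp
    calc G t = ENNReal.ofReal (g t) := rfl
      _ ≤ ENNReal.ofReal (C * ∫ s in Set.Ioo a t, (t-s)^(-κ) * g s) := ENNReal.ofReal_le_ofReal hineq
      _ = ENNReal.ofReal C * ENNReal.ofReal (∫ s in Set.Ioo a t, (t-s)^(-κ) * g s) :=
          ENNReal.ofReal_mul (le_of_lt hC)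
      _ ≤ _ := mul_le_mul_right hofI _
  -- Step C : integrate over Ioc a b and use Tonelli
  have hq : (0:ℝ) < 1 - κ := by linarith
  set L : ENNReal := ∫⁻ s in Set.Ioc a b, G s with hL
  have stepC : L ≤ ENNReal.ofReal (C * δ^(1-κ) / (1-κ)) * L := by
    calc L ≤ ∫⁻ t in Set.Ioc a b,
            ENNReal.ofReal C * ∫⁻ s in Set.Ioo a t, ENNReal.ofReal ((t-s)^(-κ)) * G s :=
          lintegral_mono_ae stepB
      _ = ENNReal.ofReal C * ∫⁻ t in Set.Ioc a b,
            ∫⁻ s in Set.Ioo a t, ENNReal.ofReal ((t-s)^(-κ)) * G s := lintegral_const_mul' _ _ ENNReal.ofReal_ne_top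
      _ = ENNReal.ofReal C * ∫⁻ s in Set.Ioo a b,
            G s * ∫⁻ t in Set.Ioc s b, ENNReal.ofReal ((t-s)^(-κ)) := by rw [swap_aux a b κ G hGm]
      _ ≤ ENNReal.ofReal C * ∫⁻ s in Set.Ioo a b, G s * ENNReal.ofReal (δ^(1-κ) / (1-κ)) := by
          apply mul_le_mul_right
          apply lintegral_mono_ae
          rw [ae_restrict_iff' measurableSet_Ioo]
          filter_upwards [ae_of_all _ (fun _ => trivial)] with s _ hs
          apply mul_le_mul_right
          rw [sg_inner_int s b κ (le_of_lt hs.2) hκ1]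
          apply ENNReal.ofReal_le_ofReal
          have hbs : (b - s) ^ (1-κ) ≤ δ ^ (1-κ) :=
            Real.rpow_le_rpow (by linarith [hs.2]) (by linarith [hs.1]) (le_of_lt hq)
          gcongr
      _ = ENNReal.ofReal C * (ENNReal.ofReal (δ^(1-κ) / (1-κ)) * ∫⁻ s in Set.Ioo a b, G s) := by
          rw [lintegral_mul_const _ hGm, mul_comm (∫⁻ s in Set.Ioo a b, G s) _]
      _ ≤ ENNReal.ofReal C * (ENNReal.ofReal (δ^(1-κ) / (1-κ)) * L) := by
          apply mul_le_mul_right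
          apply mul_le_mul_right
          exact lintegral_mono' (Measure.restrict_mono Set.Ioo_subset_Ioc_self le_rfl) le_rfl
      _ = ENNReal.ofReal (C * δ^(1-κ) / (1-κ)) * L := by
          rw [← mul_assoc, ← ENNReal.ofReal_mul (le_of_lt hC)]
          ring_nf
  -- Step D : finiteness
  have hsub2 : Set.Ioc a b ⊆ Set.Icc 0 T := fun s hs =>
    ⟨le_of_lt (lt_of_le_of_lt ha hs.1), le_trans hs.2 hbT⟩
  have hLne : L ≠ ⊤ := by
    have h1 : L ≤ ∫⁻ s in Set.Ioc a b, ‖φ s‖₊ := by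
      apply lintegral_mono_ae
      rw [ae_restrict_iff' measurableSet_Ioc]
      refine ae_of_all _ fun s hs => ?_
      calc G s = ENNReal.ofReal (g s) := rfl
        _ ≤ ENNReal.ofReal (φ s) := ENNReal.ofReal_le_ofReal (hgφ s (hsub2 hs))
        _ ≤ ‖φ s‖₊ := Real.ofReal_le_enorm _
    have h2 : (∫⁻ s in Set.Ioc a b, ‖φ s‖₊) ≤ ∫⁻ s in Set.Icc 0 T, ‖φ s‖₊ :=
      lintegral_mono' (Measure.restrict_mono hsub2 le_rfl) le_rfl
    exact ne_top_of_le_ne_top (ne_of_lt hφ.2) (le_trans h1 h2)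
  -- Step E : conclude L = 0
  have hL0 : L = 0 := by
    by_contra hne
    have hq1 : ENNReal.ofReal (C * δ^(1-κ) / (1-κ)) < 1 :=
      lt_of_le_of_lt (ENNReal.ofReal_le_ofReal hδq) (ENNReal.ofReal_lt_one.mpr (by norm_num))
    have : ENNReal.ofReal (C * δ^(1-κ) / (1-κ)) * L < 1 * L :=
      by rw [mul_comm _ L, mul_comm 1 L]; exact ENNReal.mul_lt_mul_right hne hLne hq1
    rw [one_mul] at this
    exact lt_irrefl L (lt_of_le_of_lt stepC this)
  have hae : ∀ᵐ s ∂(volume.restrict (Set.Ioc a b)), G s = 0 :=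
    (lintegral_eq_zero_iff hGm).mp hL0
  have hae' : ∀ᵐ s, s ∈ Set.Ioc a b → g s = 0 := by
    filter_upwards [(ae_restrict_iff' measurableSet_Ioc).mp hae] with s hs hmem
    have h2 : g s ≤ 0 := ENNReal.ofReal_eq_zero.mp (hs hmem)
    exact le_antisymm h2 (hgnn s (hsub2 hmem))
  filter_upwards [h0, hae'] with s h1 h2 hmem
  rcases le_or_gt s a with hsa | has
  · exact h1 ⟨hmem.1, hsa⟩
  · exact h2 ⟨has, hmem.2⟩

/-- Singular Gronwall lemma with limsup: if the nonnegative measurable functions `f n` are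
uniformly dominated by an integrable function and
`limsup_n f_n(t) ≤ C ∫_0^t (t−s)^{-κ} limsup_n f_n(s) ds` on `[0,T]` with `κ ∈ (0,1)`,
then `limsup_n f_n(t) = 0` on `[0,T]`. -/
theorem stmt18 (T C κ : ℝ) (hT : 0 < T) (hC : 0 < C) (hκ : κ ∈ Set.Ioo (0 : ℝ) 1)
    (f : ℕ → ℝ → ℝ) (hmeas : ∀ n, Measurable (f n))
    (hnn : ∀ n, ∀ t ∈ Set.Icc (0 : ℝ) T, 0 ≤ f n t)
    (φ : ℝ → ℝ) (hφ : MeasureTheory.IntegrableOn φ (Set.Icc (0 : ℝ) T))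
    (hb : ∀ n, ∀ t ∈ Set.Icc (0 : ℝ) T, f n t ≤ φ t)
    (h : ∀ t ∈ Set.Icc (0 : ℝ) T, limsup (fun n => f n t) atTop
        ≤ C * ∫ s in (0 : ℝ)..t, (t - s) ^ (-κ) * limsup (fun n => f n s) atTop) :
    ∀ t ∈ Set.Icc (0 : ℝ) T, limsup (fun n => f n t) atTop = 0 := by
  obtain ⟨hκ0, hκ1⟩ := hκ
  set g : ℝ → ℝ := fun t => limsup (fun n => f n t) atTop with hgdef
  have hgm : Measurable g := Measurable.limsup hmeas
  have hgnn : ∀ t ∈ Set.Icc (0:ℝ) T, 0 ≤ g t := by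
    intro t ht
    exact le_limsup_of_frequently_le (Frequently.of_forall fun n => hnn n t ht)
      (isBoundedUnder_of ⟨φ t, fun n => hb n t ht⟩)
  have hgφ : ∀ t ∈ Set.Icc (0:ℝ) T, g t ≤ φ t := by
    intro t ht
    refine limsup_le_of_le ?_ (Eventually.of_forall fun n => hb n t ht)
    exact (isBoundedUnder_of (α := ℝ) (f := atTop) ⟨0, fun n => hnn n t ht⟩ :
      IsBoundedUnder (· ≥ ·) atTop fun n => f n t).isCoboundedUnder_le
  have hq : (0:ℝ) < 1 - κ := by linarith
  set δ : ℝ := ((1-κ)/(2*C)) ^ ((1-κ)⁻¹) with hδdef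
  have hδ : 0 < δ := Real.rpow_pos_of_pos (by positivity) _
  have hδq : C * δ^(1-κ) / (1-κ) ≤ 1/2 := by
    rw [hδdef, Real.rpow_inv_rpow (by positivity) (ne_of_gt hq)]
    have heq : C * ((1-κ)/(2*C)) / (1-κ) = 1/2 := by
      field_simp
    rw [heq]
  have main : ∀ k : ℕ, ∀ᵐ s, s ∈ Set.Ioc (0:ℝ) (min (k*δ) T) → g s = 0 := by
    intro k
    induction k with
    | zero =>
      refine ae_of_all _ fun s hs => absurd hs ?_
      simp [min_eq_left (le_of_lt hT)]
    | succ k ih =>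
      have hstep := key_step T C κ hC hκ0 hκ1 g φ hgm hgnn hφ hgφ h δ hδ hδq
        (min (k*δ) T) (min (((k:ℝ)+1)*δ) T)
        (le_min (by positivity) (le_of_lt hT))
        (min_le_min (by push_cast; nlinarith [hδ]) le_rfl)
        (min_le_right _ _)
        (by
          rcases le_total ((k:ℝ)*δ) T with hkT | hkT
          · rw [min_eq_left hkT]
            calc min (((k:ℝ)+1)*δ) T ≤ ((k:ℝ)+1)*δ := min_le_left _ _
              _ = (k:ℝ)*δ + δ := by ring
          · rw [min_eq_right hkT]
            calc min (((k:ℝ)+1)*δ) T ≤ T := min_le_right _ _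
              _ ≤ T + δ := by linarith)
        ih
      push_cast
      exact hstep
  obtain ⟨k, hk⟩ := exists_nat_ge (T/δ)
  have hkT : T ≤ k*δ := by
    rw [div_le_iff₀ hδ] at hk; linarith
  have hTmin : min ((k:ℝ)*δ) T = T := min_eq_right hkT
  have hfin : ∀ᵐ s, s ∈ Set.Ioc (0:ℝ) T → g s = 0 := by
    have := main k; rwa [hTmin] at this
  intro t ht
  have ht0 : (0:ℝ) ≤ t := ht.1
  have hint0 : ∫ s in (0:ℝ)..t, (t-s)^(-κ) * g s = 0 := by
    rw [intervalIntegral.integral_of_le ht0]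
    apply integral_eq_zero_of_ae
    rw [EventuallyEq, ae_restrict_iff' measurableSet_Ioc]
    filter_upwards [hfin] with s hsa hmem
    show (t-s)^(-κ) * g s = 0
    rw [hsa ⟨hmem.1, le_trans hmem.2 ht.2⟩, mul_zero]
  have := h t ht
  rw [hint0, mul_zero] at this
  exact le_antisymm this (hgnn t ht)
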